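/- arXiv:1502.01375 — 3 statements merged into one kernel-verified Lean document; each statement's English description precedes it below -/
import Mathlib

section
/- Let (μ¹_t)_{t∈[0,T]} and (μ²_t)_{t∈[0,T]} be two time-dependent families of finite positive Borel measures on ℝ² of total mass N such that s ↦ W₁(μ¹_s, μ²_s) is integrable on [0,T], and let (x₁, w₁) and (x₂, w₂) be trajectories associated with (μ¹_t) and (μ²_t) respectively, with the same initial data x₁(0) = x₂(0), w₁(0) = w₂(0). Then there exists a constant C > 0 such that |x₂(t) − x₁(t)| ≤ C e^{Ct} ∫₀ᵗ W₁(μ¹_s, μ²_s) ds for all t ∈ [0, T]. -/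
set_option maxHeartbeats 1000000

open MeasureTheory Real

noncomputable section

abbrev E2 : Type := EuclideanSpace ℝ (Fin 2)

noncomputable def W1 (μ ν : Measure E2) : ℝ :=
  ⨆ φ : {φ : E2 → ℝ // LipschitzWith 1 φ}, |(∫ y, φ.1 y ∂μ) - ∫ y, φ.1 y ∂ν|

noncomputable def g (z : ℝ) : ℝ := if z = 0 then 1 else min 1 (1 / z)

lemma W1_nonneg (μ ν : Measure E2) : 0 ≤ W1 μ ν :=
  Real.iSup_nonneg fun _ => abs_nonneg _

lemma g_eq_one {v : ℝ} (hv : 0 < v) {w : E2} (h : ‖w‖ ≤ v) : g (‖w‖ / v) = 1 := by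
  unfold g
  rcases eq_or_ne ‖w‖ 0 with h0 | h0
  · simp [h0]
  · have hp : 0 < ‖w‖ := lt_of_le_of_ne (norm_nonneg _) (Ne.symm h0)
    rw [if_neg (by positivity), one_div_div]
    exact min_eq_left ((one_le_div hp).2 h)

lemma g_eq_div {v : ℝ} (hv : 0 < v) {w : E2} (h : v < ‖w‖) : g (‖w‖ / v) = v / ‖w‖ := by
  unfold g
  have hp : 0 < ‖w‖ := hv.trans h
  rw [if_neg (by positivity), one_div_div]
  exact min_eq_right ((div_le_one hp).2 h.le)

lemma h_lip_aux {v : ℝ} (hv : 0 < v) {p q : E2} (hpq : ‖q‖ ≤ ‖p‖) :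
    ‖g (‖p‖ / v) • p - g (‖q‖ / v) • q‖ ≤ 2 * ‖p - q‖ := by
  rcases le_or_gt ‖p‖ v with h1 | h1
  · rw [g_eq_one hv h1, g_eq_one hv (hpq.trans h1), one_smul, one_smul]
    have := norm_nonneg (p - q); linarith
  · have hp0 : 0 < ‖p‖ := hv.trans h1
    rw [g_eq_div hv h1]
    rcases le_or_gt ‖q‖ v with h2 | h2
    · rw [g_eq_one hv h2, one_smul]
      have tri : ‖(v / ‖p‖) • p - q‖ ≤ ‖(v / ‖p‖) • p - p‖ + ‖p - q‖ := by
        have := dist_triangle ((v / ‖p‖) • p) p q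
        simpa [dist_eq_norm] using this
      have e1 : ‖(v / ‖p‖) • p - p‖ = ‖p‖ - v := by
        have e : (v / ‖p‖) • p - p = (v / ‖p‖ - 1) • p := by rw [sub_smul, one_smul]
        rw [e, norm_smul, Real.norm_eq_abs,
          abs_of_nonpos (sub_nonpos.2 ((div_le_one hp0).2 h1.le))]
        field_simp
        ring
      have e2 : ‖p‖ - ‖q‖ ≤ ‖p - q‖ := norm_sub_norm_le p q
      rw [e1] at tri
      linarith
    · have hq0 : 0 < ‖q‖ := hv.trans h2
      rw [g_eq_div hv h2]
      have tri : ‖(v / ‖p‖) • p - (v / ‖q‖) • q‖ ≤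
          ‖(v / ‖p‖) • p - (v / ‖p‖) • q‖ + ‖(v / ‖p‖) • q - (v / ‖q‖) • q‖ := by
        have := dist_triangle ((v / ‖p‖) • p) ((v / ‖p‖) • q) ((v / ‖q‖) • q)
        simpa [dist_eq_norm] using this
      have e1 : ‖(v / ‖p‖) • p - (v / ‖p‖) • q‖ ≤ ‖p - q‖ := by
        rw [← smul_sub, norm_smul, Real.norm_eq_abs, abs_of_nonneg (by positivity)]
        exact mul_le_of_le_one_left (norm_nonneg _) ((div_le_one hp0).2 h1.le)
      have e2 : ‖(v / ‖p‖) • q - (v / ‖q‖) • q‖ ≤ ‖p - q‖ := by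
        have e : (v / ‖p‖) • q - (v / ‖q‖) • q = (v / ‖p‖ - v / ‖q‖) • q := by
          rw [sub_smul]
        rw [e, norm_smul, Real.norm_eq_abs,
          abs_of_nonpos (sub_nonpos.2 (div_le_div_of_nonneg_left hv.le hq0 hpq))]
        have e3 : -(v / ‖p‖ - v / ‖q‖) * ‖q‖ = (v / ‖p‖) * (‖p‖ - ‖q‖) := by
          field_simp; ring
        rw [e3]
        calc (v / ‖p‖) * (‖p‖ - ‖q‖) ≤ ‖p‖ - ‖q‖ :=
              mul_le_of_le_one_left (sub_nonneg.2 hpq) ((div_le_one hp0).2 h1.le)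
          _ ≤ ‖p - q‖ := norm_sub_norm_le p q
      linarith

lemma h_lip {v : ℝ} (hv : 0 < v) (p q : E2) :
    ‖g (‖p‖ / v) • p - g (‖q‖ / v) • q‖ ≤ 2 * ‖p - q‖ := by
  rcases le_total ‖q‖ ‖p‖ with h | h
  · exact h_lip_aux hv h
  · rw [norm_sub_rev, norm_sub_rev p q]
    exact h_lip_aux hv h

lemma ftc_bound {T t : ℝ} (f : ℝ → E2) (d : ℝ → E2) (b : ℝ → ℝ)
    (hf : ∀ s ∈ Set.Icc (0:ℝ) T, HasDerivAt f (d s) s)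
    (ht : t ∈ Set.Icc (0:ℝ) T)
    (hb_int : IntervalIntegrable b volume 0 t)
    (hbd : ∀ s ∈ Set.Icc (0:ℝ) t, ‖d s‖ ≤ b s) :
    ‖f t - f 0‖ ≤ ∫ s in (0:ℝ)..t, b s := by
  obtain ⟨ht0, htT⟩ := ht
  have hsub : Set.Icc (0:ℝ) t ⊆ Set.Icc 0 T := Set.Icc_subset_Icc le_rfl htT
  have huIcc : Set.uIcc (0:ℝ) t = Set.Icc 0 t := Set.uIcc_of_le ht0
  have huIoc : Set.uIoc (0:ℝ) t = Set.Ioc 0 t := Set.uIoc_of_le ht0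
  have hderiv : ∀ s ∈ Set.uIcc (0:ℝ) t, HasDerivAt f (d s) s := fun s hs =>
    hf s (hsub (huIcc ▸ hs))
  have hmem : ∀ᵐ s ∂(volume.restrict (Set.uIoc (0:ℝ) t)), s ∈ Set.Icc (0:ℝ) t := by
    filter_upwards [ae_restrict_mem measurableSet_uIoc] with s hs
    rw [huIoc] at hs
    exact Set.Ioc_subset_Icc_self hs
  have hdm : AEStronglyMeasurable d (volume.restrict (Set.uIoc (0:ℝ) t)) := by
    refine (stronglyMeasurable_deriv f).aestronglyMeasurable.congr ?_
    filter_upwards [hmem] with s hs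
    exact (hf s (hsub hs)).deriv
  have hb_int' : IntegrableOn b (Set.uIoc (0:ℝ) t) := intervalIntegrable_iff.1 hb_int
  have hd_int : IntervalIntegrable d volume 0 t := by
    rw [intervalIntegrable_iff]
    refine hb_int'.mono' hdm ?_
    filter_upwards [hmem] with s hs
    exact hbd s hs
  have heq : ∫ s in (0:ℝ)..t, d s = f t - f 0 :=
    intervalIntegral.integral_eq_sub_of_hasDerivAt hderiv hd_int
  rw [← heq]
  calc ‖∫ s in (0:ℝ)..t, d s‖ ≤ |∫ s in (0:ℝ)..t, b s| := by
        refine intervalIntegral.norm_integral_le_abs_of_norm_le ?_ hb_int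
        filter_upwards [hmem] with s hs
        exact hbd s hs
    _ = ∫ s in (0:ℝ)..t, b s := abs_of_nonneg <| intervalIntegral.integral_nonneg ht0
        fun s hs => le_trans (norm_nonneg _) (hbd s hs)

lemma gronwall_aux (T : ℝ) (hT : 0 ≤ T) (u B : ℝ → ℝ) (K M : ℝ) (hK : 0 < K)
    (hu_cont : ContinuousOn u (Set.Icc 0 T))
    (hB_cont : ContinuousOn B (Set.Icc 0 T))
    (hB_mono : ∀ s ∈ Set.Icc (0:ℝ) T, ∀ t ∈ Set.Icc (0:ℝ) T, s ≤ t → B s ≤ B t)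
    (hB_nonneg : ∀ t ∈ Set.Icc (0:ℝ) T, 0 ≤ B t)
    (hM : ∀ t ∈ Set.Icc (0:ℝ) T, u t ≤ M)
    (hineq : ∀ t ∈ Set.Icc (0:ℝ) T, u t ≤ K * (∫ s in (0:ℝ)..t, u s) + B t) :
    ∀ t ∈ Set.Icc (0:ℝ) T, u t ≤ Real.exp (K * t) * B t := by
  have key : ∀ n : ℕ, ∀ t ∈ Set.Icc (0:ℝ) T,
      u t ≤ Real.exp (K * t) * B t + M * (K * t) ^ n / n.factorial := by
    intro n
    induction n with
    | zero =>
      intro t ht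
      have h1 : 0 ≤ Real.exp (K * t) * B t := mul_nonneg (Real.exp_nonneg _) (hB_nonneg t ht)
      have := hM t ht
      simp only [pow_zero, Nat.factorial_zero, Nat.cast_one, mul_one, div_one]
      linarith
    | succ n ih =>
      intro t ht
      obtain ⟨ht0, htT⟩ := ht
      have hsub : Set.Icc (0:ℝ) t ⊆ Set.Icc 0 T := Set.Icc_subset_Icc le_rfl htT
      have huIcc : Set.uIcc (0:ℝ) t = Set.Icc 0 t := Set.uIcc_of_le ht0
      have hu_int : IntervalIntegrable u volume 0 t :=
        (show ContinuousOn u (Set.uIcc 0 t) from huIcc ▸ hu_cont.mono hsub).intervalIntegrable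
      set w : ℝ → ℝ := fun s => Real.exp (K * s) * B s + M * (K * s) ^ n / n.factorial with hw
      have hw_cont : ContinuousOn w (Set.Icc 0 t) := by
        apply ContinuousOn.add
        · exact ((Real.continuous_exp.comp (continuous_const.mul continuous_id)).continuousOn).mul
            (hB_cont.mono hsub)
        · exact (Continuous.continuousOn
            ((continuous_const.mul ((continuous_const.mul continuous_id).pow n)).div_const _))
      have hw_int : IntervalIntegrable w volume 0 t :=
        (show ContinuousOn w (Set.uIcc 0 t) from huIcc ▸ hw_cont).intervalIntegrable
      have h1 : (∫ s in (0:ℝ)..t, u s) ≤ ∫ s in (0:ℝ)..t, w s :=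
        intervalIntegral.integral_mono_on ht0 hu_int hw_int fun s hs => ih s (hsub hs)
      -- split w
      have hw1_cont : ContinuousOn (fun s => Real.exp (K * s) * B s) (Set.Icc 0 t) :=
        ((Real.continuous_exp.comp (continuous_const.mul continuous_id)).continuousOn).mul
          (hB_cont.mono hsub)
      have hw1_int : IntervalIntegrable (fun s => Real.exp (K * s) * B s) volume 0 t :=
        (show ContinuousOn _ (Set.uIcc 0 t) from huIcc ▸ hw1_cont).intervalIntegrable
      have hw2_int : IntervalIntegrable (fun s => M * (K * s) ^ n / n.factorial) volume 0 t :=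
        (Continuous.intervalIntegrable
          ((continuous_const.mul ((continuous_const.mul continuous_id).pow n)).div_const _) 0 t)
      have hsplit : (∫ s in (0:ℝ)..t, w s) =
          (∫ s in (0:ℝ)..t, Real.exp (K * s) * B s)
            + ∫ s in (0:ℝ)..t, M * (K * s) ^ n / n.factorial :=
        intervalIntegral.integral_add hw1_int hw2_int
      -- bound first part
      have hexp_cont : Continuous (fun s : ℝ => Real.exp (K * s)) :=
        Real.continuous_exp.comp (continuous_const.mul continuous_id)
      have hp1 : (∫ s in (0:ℝ)..t, Real.exp (K * s) * B s)
          ≤ ∫ s in (0:ℝ)..t, Real.exp (K * s) * B t := by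
        refine intervalIntegral.integral_mono_on ht0 hw1_int
          ((hexp_cont.mul continuous_const).intervalIntegrable 0 t) fun s hs => ?_
        exact mul_le_mul_of_nonneg_left
          (hB_mono s (hsub hs) t ⟨ht0, htT⟩ hs.2) (Real.exp_nonneg _)
      have hexp_integral : (∫ s in (0:ℝ)..t, Real.exp (K * s))
          = (Real.exp (K * t) - 1) / K := by
        have hder : ∀ s ∈ Set.uIcc (0:ℝ) t,
            HasDerivAt (fun r => Real.exp (K * r) / K) (Real.exp (K * s)) s := by
          intro s _
          have h1 : HasDerivAt (fun r : ℝ => K * r) K s := by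
            simpa using (hasDerivAt_id s).const_mul K
          have h2 := (Real.hasDerivAt_exp (K * s)).comp s h1
          have h3 := h2.div_const K
          rw [mul_div_cancel_right₀ _ hK.ne'] at h3
          exact h3
        rw [intervalIntegral.integral_eq_sub_of_hasDerivAt hder
          (hexp_cont.intervalIntegrable 0 t)]
        simp [sub_div]
      have hp1' : (∫ s in (0:ℝ)..t, Real.exp (K * s) * B t)
          = (Real.exp (K * t) - 1) / K * B t := by
        rw [intervalIntegral.integral_mul_const, hexp_integral]
      -- second part
      have hp2 : (∫ s in (0:ℝ)..t, M * (K * s) ^ n / n.factorial)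
          = M * K ^ n / n.factorial * (t ^ (n + 1) / (n + 1)) := by
        have : ∀ s : ℝ, M * (K * s) ^ n / n.factorial
            = M * K ^ n / n.factorial * s ^ n := by
          intro s; rw [mul_pow]; ring
        simp_rw [this]
        rw [intervalIntegral.integral_const_mul, integral_pow]
        ring
      have hfin := hineq t ⟨ht0, htT⟩
      have hcast : ((n + 1).factorial : ℝ) = (n + 1) * n.factorial := by
        push_cast [Nat.factorial_succ]; ring
      have hnfac : (0:ℝ) < n.factorial := by positivity
      calc u t ≤ K * (∫ s in (0:ℝ)..t, u s) + B t := hfin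
        _ ≤ K * ((Real.exp (K * t) - 1) / K * B t
              + M * K ^ n / n.factorial * (t ^ (n + 1) / (n + 1))) + B t := by
            have h3 : (∫ s in (0:ℝ)..t, u s) ≤ (Real.exp (K * t) - 1) / K * B t
                + M * K ^ n / n.factorial * (t ^ (n + 1) / (n + 1)) := by
              calc (∫ s in (0:ℝ)..t, u s) ≤ ∫ s in (0:ℝ)..t, w s := h1
                _ = _ := hsplit
                _ ≤ _ := by rw [hp2]; exact add_le_add_left (hp1.trans_eq hp1') _
            exact add_le_add_left (mul_le_mul_of_nonneg_left h3 hK.le) _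
        _ = Real.exp (K * t) * B t + M * (K * t) ^ (n + 1) / (n + 1).factorial := by
            rw [hcast, mul_pow]
            field_simp
            ring
  intro t ht
  have hlim : Filter.Tendsto
      (fun n : ℕ => Real.exp (K * t) * B t + M * (K * t) ^ n / n.factorial)
      Filter.atTop (nhds (Real.exp (K * t) * B t + 0)) := by
    refine Filter.Tendsto.const_add _ ?_
    have := (FloorSemiring.tendsto_pow_div_factorial_atTop (K * t)).const_mul M
    simpa [mul_div_assoc] using this
  have := ge_of_tendsto' hlim fun n => key n t ht
  simpa using this
theorem stmt0
    (vmax : ℝ) (hvmax : 0 < vmax) (N : NNReal) (T : ℝ) (hT : 0 ≤ T)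
    -- the acceleration functional
    (a : Measure E2 → E2 → E2 → E2)
    (amax Lipa : ℝ) (hamax : 0 < amax) (hLipa : 0 < Lipa)
    -- Assumption 1: boundedness
    (ha_bdd : ∀ μ : Measure E2, IsFiniteMeasure μ → μ Set.univ = (N : ENNReal) →
      ∀ x w : E2, ‖a μ x w‖ ≤ amax)
    -- Assumption 1: Lipschitz continuity
    (ha_lip : ∀ μ ν : Measure E2, IsFiniteMeasure μ → IsFiniteMeasure ν →
      μ Set.univ = (N : ENNReal) → ν Set.univ = (N : ENNReal) →
      ∀ x₁ x₂ w₁ w₂ : E2,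
        ‖a ν x₂ w₂ - a μ x₁ w₁‖ ≤ Lipa * (‖x₂ - x₁‖ + ‖w₂ - w₁‖ + W1 μ ν))
    -- the two time-dependent families of measures of mass N
    (μ1 μ2 : ℝ → Measure E2)
    (hμ1 : ∀ s ∈ Set.Icc (0 : ℝ) T, IsFiniteMeasure (μ1 s) ∧ μ1 s Set.univ = (N : ENNReal))
    (hμ2 : ∀ s ∈ Set.Icc (0 : ℝ) T, IsFiniteMeasure (μ2 s) ∧ μ2 s Set.univ = (N : ENNReal))
    -- integrability of the Wasserstein distance in time
    (hW : IntegrableOn (fun s => W1 (μ1 s) (μ2 s)) (Set.Icc (0 : ℝ) T))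
    -- the associated trajectories
    (x₁ w₁ x₂ w₂ : ℝ → E2)
    (hx₁ : ∀ t ∈ Set.Icc (0 : ℝ) T, HasDerivAt x₁ (g (‖w₁ t‖ / vmax) • w₁ t) t)
    (hw₁ : ∀ t ∈ Set.Icc (0 : ℝ) T, HasDerivAt w₁ (a (μ1 t) (x₁ t) (w₁ t)) t)
    (hx₂ : ∀ t ∈ Set.Icc (0 : ℝ) T, HasDerivAt x₂ (g (‖w₂ t‖ / vmax) • w₂ t) t)
    (hw₂ : ∀ t ∈ Set.Icc (0 : ℝ) T, HasDerivAt w₂ (a (μ2 t) (x₂ t) (w₂ t)) t)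
    -- same initial data
    (h0x : x₁ 0 = x₂ 0) (h0w : w₁ 0 = w₂ 0) :
    ∃ C > (0 : ℝ), ∀ t ∈ Set.Icc (0 : ℝ) T,
      ‖x₂ t - x₁ t‖ ≤ C * Real.exp (C * t) * ∫ s in (0 : ℝ)..t, W1 (μ1 s) (μ2 s) := by
  classical
  set φf : ℝ → E2 := fun t => x₂ t - x₁ t with hφdef
  set ψf : ℝ → E2 := fun t => w₂ t - w₁ t with hψdef
  set uf : ℝ → ℝ := fun t => ‖φf t‖ + ‖ψf t‖ with hudef
  set Wd : ℝ → ℝ := fun s => W1 (μ1 s) (μ2 s) with hWdef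
  have hWd_nonneg : ∀ s, 0 ≤ Wd s := fun s => W1_nonneg _ _
  have hφd : ∀ s ∈ Set.Icc (0:ℝ) T,
      HasDerivAt φf (g (‖w₂ s‖ / vmax) • w₂ s - g (‖w₁ s‖ / vmax) • w₁ s) s :=
    fun s hs => (hx₂ s hs).sub (hx₁ s hs)
  have hψd : ∀ s ∈ Set.Icc (0:ℝ) T,
      HasDerivAt ψf (a (μ2 s) (x₂ s) (w₂ s) - a (μ1 s) (x₁ s) (w₁ s)) s :=
    fun s hs => (hw₂ s hs).sub (hw₁ s hs)
  have hφ_cont : ContinuousOn φf (Set.Icc 0 T) :=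
    fun s hs => ((hφd s hs).continuousAt).continuousWithinAt
  have hψ_cont : ContinuousOn ψf (Set.Icc 0 T) :=
    fun s hs => ((hψd s hs).continuousAt).continuousWithinAt
  have hu_cont : ContinuousOn uf (Set.Icc 0 T) := hφ_cont.norm.add hψ_cont.norm
  have hWint : ∀ t ∈ Set.Icc (0:ℝ) T, IntervalIntegrable Wd volume 0 t := by
    intro t ht
    rw [intervalIntegrable_iff]
    refine hW.mono_set ?_
    rw [Set.uIoc_of_le ht.1]
    exact Set.Ioc_subset_Icc_self.trans (Set.Icc_subset_Icc le_rfl ht.2)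
  set K : ℝ := Lipa + 2 with hKdef
  have hK : (0:ℝ) < K := by rw [hKdef]; linarith
  set B : ℝ → ℝ := fun t => Lipa * ∫ s in (0:ℝ)..t, Wd s with hBdef
  have hB_cont : ContinuousOn B (Set.Icc 0 T) := by
    have h1 : IntegrableOn Wd (Set.uIcc 0 T) volume := by
      rw [Set.uIcc_of_le hT]; exact hW
    have h2 := intervalIntegral.continuousOn_primitive_interval h1
    rw [Set.uIcc_of_le hT] at h2
    exact continuousOn_const.mul h2
  have hB_nonneg : ∀ t ∈ Set.Icc (0:ℝ) T, 0 ≤ B t := fun t ht =>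
    mul_nonneg hLipa.le (intervalIntegral.integral_nonneg ht.1 fun s _ => hWd_nonneg s)
  have hB_mono : ∀ s ∈ Set.Icc (0:ℝ) T, ∀ t ∈ Set.Icc (0:ℝ) T, s ≤ t → B s ≤ B t := by
    intro s hs t ht hst
    refine mul_le_mul_of_nonneg_left ?_ hLipa.le
    have hst_int : IntervalIntegrable Wd volume s t := by
      rw [intervalIntegrable_iff]
      refine hW.mono_set ?_
      refine Set.uIoc_subset_uIcc.trans ?_
      exact Set.uIcc_subset_Icc hs ht
    have hadd := intervalIntegral.integral_add_adjacent_intervals (hWint s hs) hst_int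
    have hpos : 0 ≤ ∫ r in s..t, Wd r :=
      intervalIntegral.integral_nonneg hst fun r _ => hWd_nonneg r
    linarith [hadd]
  obtain ⟨t₀, ht₀, hmax⟩ := isCompact_Icc.exists_isMaxOn (Set.nonempty_Icc.2 hT) hu_cont
  set M : ℝ := uf t₀ with hMdef
  have hM : ∀ t ∈ Set.Icc (0:ℝ) T, uf t ≤ M := fun t ht => hmax ht
  -- key integral inequality
  have hkey : ∀ t ∈ Set.Icc (0:ℝ) T, uf t ≤ K * (∫ s in (0:ℝ)..t, uf s) + B t := by
    intro t ht
    have hsub : Set.Icc (0:ℝ) t ⊆ Set.Icc 0 T := Set.Icc_subset_Icc le_rfl ht.2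
    have huIcc : Set.uIcc (0:ℝ) t = Set.Icc 0 t := Set.uIcc_of_le ht.1
    have i1 : IntervalIntegrable (fun s => 2 * ‖ψf s‖) volume 0 t :=
      (show ContinuousOn _ (Set.uIcc 0 t) from huIcc ▸
        (continuousOn_const.mul (hψ_cont.mono hsub).norm)).intervalIntegrable
    have icont : ContinuousOn (fun s => ‖φf s‖ + ‖ψf s‖) (Set.Icc 0 t) :=
      ((hφ_cont.mono hsub).norm).add ((hψ_cont.mono hsub).norm)
    have i2 : IntervalIntegrable (fun s => Lipa * (‖φf s‖ + ‖ψf s‖ + Wd s)) volume 0 t := by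
      refine IntervalIntegrable.const_mul ?_ Lipa
      exact ((show ContinuousOn _ (Set.uIcc 0 t) from huIcc ▸ icont).intervalIntegrable).add
        (hWint t ht)
    have hφb : ‖φf t‖ ≤ ∫ s in (0:ℝ)..t, 2 * ‖ψf s‖ := by
      have h0 : φf 0 = 0 := by simp [hφdef, h0x]
      have := ftc_bound φf _ (fun s => 2 * ‖ψf s‖) hφd ht i1
        (fun s hs => h_lip hvmax (w₂ s) (w₁ s))
      rwa [h0, sub_zero] at this
    have hψb : ‖ψf t‖ ≤ ∫ s in (0:ℝ)..t, Lipa * (‖φf s‖ + ‖ψf s‖ + Wd s) := by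
      have h0 : ψf 0 = 0 := by simp [hψdef, h0w]
      have hb : ∀ s ∈ Set.Icc (0:ℝ) t,
          ‖a (μ2 s) (x₂ s) (w₂ s) - a (μ1 s) (x₁ s) (w₁ s)‖
            ≤ Lipa * (‖φf s‖ + ‖ψf s‖ + Wd s) := by
        intro s hs
        have hs' := hsub hs
        exact ha_lip (μ1 s) (μ2 s) (hμ1 s hs').1 (hμ2 s hs').1 (hμ1 s hs').2 (hμ2 s hs').2
          (x₁ s) (x₂ s) (w₁ s) (w₂ s)
      have := ftc_bound ψf _ (fun s => Lipa * (‖φf s‖ + ‖ψf s‖ + Wd s)) hψd ht i2 hb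
      rwa [h0, sub_zero] at this
    have iKu : IntervalIntegrable (fun s => K * uf s) volume 0 t :=
      IntervalIntegrable.const_mul
        ((show ContinuousOn uf (Set.uIcc 0 t) from huIcc ▸ hu_cont.mono hsub).intervalIntegrable) K
    have iLW : IntervalIntegrable (fun s => Lipa * Wd s) volume 0 t :=
      IntervalIntegrable.const_mul (hWint t ht) Lipa
    calc uf t = ‖φf t‖ + ‖ψf t‖ := rfl
      _ ≤ (∫ s in (0:ℝ)..t, 2 * ‖ψf s‖)
            + ∫ s in (0:ℝ)..t, Lipa * (‖φf s‖ + ‖ψf s‖ + Wd s) := add_le_add hφb hψb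
      _ = ∫ s in (0:ℝ)..t, (2 * ‖ψf s‖ + Lipa * (‖φf s‖ + ‖ψf s‖ + Wd s)) :=
          (intervalIntegral.integral_add i1 i2).symm
      _ ≤ ∫ s in (0:ℝ)..t, (K * uf s + Lipa * Wd s) := by
          refine intervalIntegral.integral_mono_on ht.1 (i1.add i2) (iKu.add iLW) ?_
          intro s _
          have h1 := norm_nonneg (φf s)
          simp only [hudef, hKdef]
          ring_nf
          nlinarith [norm_nonneg (φf s), norm_nonneg (ψf s)]
      _ = K * (∫ s in (0:ℝ)..t, uf s) + Lipa * ∫ s in (0:ℝ)..t, Wd s := by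
          rw [intervalIntegral.integral_add iKu iLW,
            intervalIntegral.integral_const_mul, intervalIntegral.integral_const_mul]
      _ = K * (∫ s in (0:ℝ)..t, uf s) + B t := rfl
  have hfinal := gronwall_aux T hT uf B K M hK hu_cont hB_cont hB_mono hB_nonneg hM hkey
  refine ⟨K + Lipa, by linarith, fun t ht => ?_⟩
  have hA : 0 ≤ ∫ s in (0:ℝ)..t, Wd s :=
    intervalIntegral.integral_nonneg ht.1 fun s _ => hWd_nonneg s
  have h1 : ‖x₂ t - x₁ t‖ ≤ uf t := le_add_of_nonneg_right (norm_nonneg _)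
  have h2 := hfinal t ht
  have hexp : Real.exp (K * t) ≤ Real.exp ((K + Lipa) * t) := by
    refine Real.exp_le_exp.2 ?_
    nlinarith [ht.1, hLipa]
  have h3 : Real.exp (K * t) * B t
      ≤ (K + Lipa) * Real.exp ((K + Lipa) * t) * ∫ s in (0:ℝ)..t, Wd s := by
    have hBt : B t = Lipa * ∫ s in (0:ℝ)..t, Wd s := rfl
    rw [hBt]
    have hstep : Real.exp (K * t) * (Lipa * ∫ s in (0:ℝ)..t, Wd s)
        ≤ Real.exp ((K + Lipa) * t) * ((K + Lipa) * ∫ s in (0:ℝ)..t, Wd s) := by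
      refine mul_le_mul hexp ?_ (by positivity) (Real.exp_nonneg _)
      exact mul_le_mul_of_nonneg_right (by linarith) hA
    linarith [hstep]
  calc ‖x₂ t - x₁ t‖ ≤ uf t := h1
    _ ≤ Real.exp (K * t) * B t := h2
    _ ≤ (K + Lipa) * Real.exp ((K + Lipa) * t) * ∫ s in (0:ℝ)..t, Wd s := h3
end
end

section
/- Let (μ¹_t)_{t∈[0,T]} and (μ²_t)_{t∈[0,T]} be two time-dependent families of finite positive Borel measures on ℝ² of total mass N such that s ↦ W₁(μ¹_s, μ²_s) is integrable on [0,T], and let (x₁, w₁) and (x₂, w₂) be trajectories associated with (μ¹_t) and (μ²_t) respectively, with the same initial data x₁(0) = x₂(0), w₁(0) = w₂(0). Then for all t ∈ [0, T], |w₂(t) − w₁(t)| ≤ Lip_a e^{Lip_a t} ∫₀ᵗ ( |x₂(s) − x₁(s)| + W₁(μ¹_s, μ²_s) ) ds, where Lip_a is the Lipschitz constant of the acceleration functional from Assumption 1. -/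
open MeasureTheory Real

noncomputable section

theorem stmt1
    (vmax : ℝ) (hvmax : 0 < vmax) (N : NNReal) (T : ℝ) (hT : 0 ≤ T)
    -- the acceleration functional
    (a : Measure E2 → E2 → E2 → E2)
    (amax Lipa : ℝ) (hamax : 0 < amax) (hLipa : 0 < Lipa)
    -- Assumption 1: boundedness
    (ha_bdd : ∀ μ : Measure E2, IsFiniteMeasure μ → μ Set.univ = (N : ENNReal) →
      ∀ x w : E2, ‖a μ x w‖ ≤ amax)
    -- Assumption 1: Lipschitz continuity
    (ha_lip : ∀ μ ν : Measure E2, IsFiniteMeasure μ → IsFiniteMeasure ν →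
      μ Set.univ = (N : ENNReal) → ν Set.univ = (N : ENNReal) →
      ∀ x₁ x₂ w₁ w₂ : E2,
        ‖a ν x₂ w₂ - a μ x₁ w₁‖ ≤ Lipa * (‖x₂ - x₁‖ + ‖w₂ - w₁‖ + W1 μ ν))
    -- the two time-dependent families of measures of mass N
    (μ1 μ2 : ℝ → Measure E2)
    (hμ1 : ∀ s ∈ Set.Icc (0 : ℝ) T, IsFiniteMeasure (μ1 s) ∧ μ1 s Set.univ = (N : ENNReal))
    (hμ2 : ∀ s ∈ Set.Icc (0 : ℝ) T, IsFiniteMeasure (μ2 s) ∧ μ2 s Set.univ = (N : ENNReal))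
    -- integrability of the Wasserstein distance in time
    (hW : IntegrableOn (fun s => W1 (μ1 s) (μ2 s)) (Set.Icc (0 : ℝ) T))
    -- the associated trajectories
    (x₁ w₁ x₂ w₂ : ℝ → E2)
    (hx₁ : ∀ t ∈ Set.Icc (0 : ℝ) T, HasDerivAt x₁ (g (‖w₁ t‖ / vmax) • w₁ t) t)
    (hw₁ : ∀ t ∈ Set.Icc (0 : ℝ) T, HasDerivAt w₁ (a (μ1 t) (x₁ t) (w₁ t)) t)
    (hx₂ : ∀ t ∈ Set.Icc (0 : ℝ) T, HasDerivAt x₂ (g (‖w₂ t‖ / vmax) • w₂ t) t)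
    (hw₂ : ∀ t ∈ Set.Icc (0 : ℝ) T, HasDerivAt w₂ (a (μ2 t) (x₂ t) (w₂ t)) t)
    -- same initial data
    (h0x : x₁ 0 = x₂ 0) (h0w : w₁ 0 = w₂ 0) :
    ∀ t ∈ Set.Icc (0 : ℝ) T,
      ‖w₂ t - w₁ t‖ ≤ Lipa * Real.exp (Lipa * t) *
        ∫ s in (0 : ℝ)..t, (‖x₂ s - x₁ s‖ + W1 (μ1 s) (μ2 s)) := by
  set F : ℝ → ℝ := fun s => ‖x₂ s - x₁ s‖ + W1 (μ1 s) (μ2 s) with hFdef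
  intro t ht
  -- continuity of the trajectories
  have hcx₁ : ContinuousOn x₁ (Set.Icc 0 T) := fun s hs =>
    (hx₁ s hs).continuousAt.continuousWithinAt
  have hcx₂ : ContinuousOn x₂ (Set.Icc 0 T) := fun s hs =>
    (hx₂ s hs).continuousAt.continuousWithinAt
  have hcw₁ : ContinuousOn w₁ (Set.Icc 0 T) := fun s hs =>
    (hw₁ s hs).continuousAt.continuousWithinAt
  have hcw₂ : ContinuousOn w₂ (Set.Icc 0 T) := fun s hs =>
    (hw₂ s hs).continuousAt.continuousWithinAt
  -- clamping map onto [0, T]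
  set prj : ℝ → ℝ := fun s => min (max s 0) T with hprjdef
  have hprjc : Continuous prj := (continuous_id.max continuous_const).min continuous_const
  have hprjmem : ∀ s, prj s ∈ Set.Icc (0 : ℝ) T := fun s =>
    ⟨le_min (le_max_right _ _) hT, min_le_right _ _⟩
  have hprjeq : ∀ s ∈ Set.Icc (0 : ℝ) T, prj s = s := by
    intro s hs
    simp only [hprjdef]
    rw [max_eq_left hs.1, min_eq_left hs.2]
  -- globally continuous version of ‖w₂ - w₁‖
  set U : ℝ → ℝ := fun s => ‖w₂ (prj s) - w₁ (prj s)‖ with hUdef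
  have hUc : Continuous U :=
    ((hcw₂.comp_continuous hprjc hprjmem).sub (hcw₁.comp_continuous hprjc hprjmem)).norm
  have hUeq : ∀ s ∈ Set.Icc (0 : ℝ) T, U s = ‖w₂ s - w₁ s‖ := by
    intro s hs
    simp only [hUdef, hprjeq s hs]
  have hU0 : ∀ s, 0 ≤ U s := fun s => norm_nonneg _
  -- integrability of F
  have hFint : IntegrableOn F (Set.Icc 0 T) := ((hcx₂.sub hcx₁).norm.integrableOn_Icc).add hW
  have hFII : ∀ u v : ℝ, u ∈ Set.Icc (0 : ℝ) T → v ∈ Set.Icc (0 : ℝ) T →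
      IntervalIntegrable F volume u v := by
    intro u v hu hv
    rw [intervalIntegrable_iff']
    exact hFint.mono_set (Set.uIcc_subset_Icc hu hv)
  have hF0 : ∀ s ∈ Set.Icc (0 : ℝ) T, 0 ≤ F s := fun s _ =>
    add_nonneg (norm_nonneg _) (W1_nonneg _ _)
  -- the primitive of U
  set G : ℝ → ℝ := fun r => ∫ s in (0 : ℝ)..r, U s with hGdef
  have hGd : ∀ r : ℝ, HasDerivAt G (U r) r := fun r =>
    (hUc.integral_hasStrictDerivAt 0 r).hasDerivAt
  have hGnn : ∀ r : ℝ, 0 ≤ r → 0 ≤ G r := fun r hr =>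
    intervalIntegral.integral_nonneg hr fun u _ => hU0 u
  -- the derivative of w₂ - w₁
  set h12 : ℝ → E2 := fun s => a (μ2 s) (x₂ s) (w₂ s) - a (μ1 s) (x₁ s) (w₁ s) with h12def
  have h12eq : ∀ s ∈ Set.Icc (0 : ℝ) T, h12 s = deriv w₂ s - deriv w₁ s := by
    intro s hs
    simp only [h12def, (hw₂ s hs).deriv, (hw₁ s hs).deriv]
  have h12m : AEStronglyMeasurable h12 (volume.restrict (Set.Icc (0 : ℝ) T)) := by
    refine (((stronglyMeasurable_deriv w₂).sub
      (stronglyMeasurable_deriv w₁)).aestronglyMeasurable).congr ?_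
    exact (ae_restrict_iff' measurableSet_Icc).2 (ae_of_all _ fun s hs => (h12eq s hs).symm)
  have h12bdd : ∀ s ∈ Set.Icc (0 : ℝ) T, ‖h12 s‖ ≤ Lipa * (F s + U s) := by
    intro s hs
    have hl := ha_lip (μ1 s) (μ2 s) (hμ1 s hs).1 (hμ2 s hs).1 (hμ1 s hs).2 (hμ2 s hs).2
      (x₁ s) (x₂ s) (w₁ s) (w₂ s)
    rw [hUeq s hs]
    calc ‖h12 s‖ ≤ Lipa * (‖x₂ s - x₁ s‖ + ‖w₂ s - w₁ s‖ + W1 (μ1 s) (μ2 s)) := hl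
      _ = Lipa * (F s + ‖w₂ s - w₁ s‖) := by simp only [hFdef]; ring
  have h12int : IntegrableOn h12 (Set.Icc (0 : ℝ) T) := by
    refine Integrable.mono' (g := fun _ => amax + amax)
      (integrableOn_const measure_Icc_lt_top.ne) h12m ?_
    refine (ae_restrict_iff' measurableSet_Icc).2 (ae_of_all _ fun s hs => ?_)
    calc ‖h12 s‖ ≤ ‖a (μ2 s) (x₂ s) (w₂ s)‖ + ‖a (μ1 s) (x₁ s) (w₁ s)‖ := norm_sub_le _ _
      _ ≤ amax + amax := add_le_add (ha_bdd _ (hμ2 s hs).1 (hμ2 s hs).2 _ _)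
          (ha_bdd _ (hμ1 s hs).1 (hμ1 s hs).2 _ _)
  -- the key integral inequality
  have key : ∀ r ∈ Set.Icc (0 : ℝ) T,
      ‖w₂ r - w₁ r‖ ≤ Lipa * (∫ s in (0 : ℝ)..r, F s) + Lipa * G r := by
    intro r hr
    have hsub : Set.Icc (0 : ℝ) r ⊆ Set.Icc (0 : ℝ) T := Set.Icc_subset_Icc le_rfl hr.2
    have huicc : Set.uIcc (0 : ℝ) r = Set.Icc (0 : ℝ) r := Set.uIcc_of_le hr.1
    have hint : IntervalIntegrable h12 volume 0 r := by
      rw [intervalIntegrable_iff']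
      exact h12int.mono_set (huicc ▸ hsub)
    have hftc : ∫ s in (0 : ℝ)..r, h12 s = w₂ r - w₁ r := by
      have hd : ∀ s ∈ Set.uIcc (0 : ℝ) r, HasDerivAt (fun u => w₂ u - w₁ u) (h12 s) s := by
        intro s hs
        rw [huicc] at hs
        exact (hw₂ s (hsub hs)).sub (hw₁ s (hsub hs))
      rw [intervalIntegral.integral_eq_sub_of_hasDerivAt hd hint, h0w]
      simp
    have hF0r : IntervalIntegrable F volume 0 r := hFII 0 r ⟨le_rfl, hT⟩ hr
    have hUII : IntervalIntegrable U volume 0 r := hUc.intervalIntegrable 0 r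
    have hmaj : IntervalIntegrable (fun s => Lipa * (F s + U s)) volume 0 r :=
      (hF0r.add hUII).const_mul Lipa
    calc ‖w₂ r - w₁ r‖ = ‖∫ s in (0 : ℝ)..r, h12 s‖ := by rw [hftc]
      _ ≤ ∫ s in (0 : ℝ)..r, ‖h12 s‖ := intervalIntegral.norm_integral_le_integral_norm hr.1
      _ ≤ ∫ s in (0 : ℝ)..r, Lipa * (F s + U s) :=
          intervalIntegral.integral_mono_on hr.1 hint.norm hmaj fun s hs => h12bdd s (hsub hs)
      _ = Lipa * (∫ s in (0 : ℝ)..r, F s) + Lipa * G r := by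
          simp only [hGdef]
          rw [intervalIntegral.integral_const_mul, intervalIntegral.integral_add hF0r hUII]
          ring
  -- monotonicity of the F-integral in the upper limit
  have hFmono : ∀ r ∈ Set.Icc (0 : ℝ) t,
      (∫ s in (0 : ℝ)..r, F s) ≤ ∫ s in (0 : ℝ)..t, F s := by
    intro r hr
    have hrT : r ∈ Set.Icc (0 : ℝ) T := ⟨hr.1, le_trans hr.2 ht.2⟩
    have h1 : IntervalIntegrable F volume 0 r := hFII 0 r ⟨le_rfl, hT⟩ hrT
    have h2 : IntervalIntegrable F volume r t := hFII r t hrT ht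
    have hadd := intervalIntegral.integral_add_adjacent_intervals h1 h2
    have hnn : 0 ≤ ∫ s in r..t, F s :=
      intervalIntegral.integral_nonneg hr.2 fun u hu =>
        hF0 u ⟨le_trans hr.1 hu.1, le_trans hu.2 ht.2⟩
    linarith
  set ε : ℝ := Lipa * ∫ s in (0 : ℝ)..t, F s with hεdef
  -- Grönwall's inequality applied to G
  have gron : ‖G t‖ ≤ gronwallBound 0 Lipa ε (t - 0) := by
    refine norm_le_gronwallBound_of_norm_deriv_right_le (f := G) (f' := U)
      (fun r _ => (hGd r).continuousAt.continuousWithinAt)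
      (fun r _ => (hGd r).hasDerivWithinAt) ?_ ?_ t ⟨ht.1, le_rfl⟩
    · simp [hGdef]
    · intro r hr
      have hrT : r ∈ Set.Icc (0 : ℝ) T := ⟨hr.1, le_trans hr.2.le ht.2⟩
      have hk := key r hrT
      rw [Real.norm_of_nonneg (hU0 r), Real.norm_of_nonneg (hGnn r hr.1), hUeq r hrT]
      have hm := mul_le_mul_of_nonneg_left (hFmono r ⟨hr.1, hr.2.le⟩) hLipa.le
      rw [hεdef]
      linarith
  rw [Real.norm_of_nonneg (hGnn t ht.1), sub_zero,
    gronwallBound_of_K_ne_0 hLipa.ne'] at gron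
  simp only [zero_mul, zero_add] at gron
  have hkey := key t ht
  have hG := mul_le_mul_of_nonneg_left gron hLipa.le
  have hε : Lipa * (ε / Lipa * (Real.exp (Lipa * t) - 1)) = ε * Real.exp (Lipa * t) - ε := by
    field_simp
  rw [hε] at hG
  have : ‖w₂ t - w₁ t‖ ≤ ε * Real.exp (Lipa * t) := by
    rw [hεdef] at hG ⊢
    linarith
  calc ‖w₂ t - w₁ t‖ ≤ ε * Real.exp (Lipa * t) := this
    _ = Lipa * Real.exp (Lipa * t) * ∫ s in (0 : ℝ)..t, F s := by rw [hεdef]; ring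
end
end

section
/- Let ε and ρ be finite positive Borel measures on ℝ² of equal total mass N, let θ₁, θ₂ : ℝ² → [0,1] be Lipschitz continuous with Lipschitz constants Lip_{θ₁}, Lip_{θ₂}, and let x₁, x₂ ∈ ℝ². Set μⁱ = θ_i(x_i) ε + (1 − θ_i(x_i)) ρ for i = 1, 2. Then W₁(μ¹, μ²) ≤ ( ‖θ₂ − θ₁‖_∞ + min{Lip_{θ₁}, Lip_{θ₂}} · |x₂ − x₁| ) · W₁(ε, ρ). -/
open MeasureTheory Real

noncomputable section

/-- The multiscale measure `θ(x) ε + (1 - θ(x)) ρ`. -/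
noncomputable def multiscale (ε ρ : Measure E2) (θ : E2 → ℝ) (x : E2) : Measure E2 :=
  ENNReal.ofReal (θ x) • ε + ENNReal.ofReal (1 - θ x) • ρ

namespace Stmt3Aux

instance : Nonempty {φ : E2 → ℝ // LipschitzWith 1 φ} :=
  ⟨⟨fun _ => 0, (LipschitzWith.const 0).weaken zero_le_one⟩⟩

/-- The set of "good" dual values. -/
def Tset (μ ν : Measure E2) : Set ℝ :=
  {t | ∃ φ : E2 → ℝ, LipschitzWith 1 φ ∧ Integrable φ μ ∧ Integrable φ ν ∧
    t = |(∫ y, φ y ∂μ) - ∫ y, φ y ∂ν|}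

lemma zero_mem_Tset (μ ν : Measure E2) : (0 : ℝ) ∈ Tset μ ν :=
  ⟨fun _ => 0, (LipschitzWith.const 0).weaken zero_le_one,
    integrable_zero _ _ _, integrable_zero _ _ _, by simp⟩

lemma Tset_comm (μ ν : Measure E2) : Tset μ ν = Tset ν μ := by
  ext t
  constructor <;> rintro ⟨φ, h1, h2, h3, rfl⟩ <;>
    exact ⟨φ, h1, h3, h2, (abs_sub_comm _ _)⟩

/-- If some 1-Lipschitz function is integrable w.r.t. `μ` but not `ν`, then the set of
good dual values is unbounded above. -/
lemma not_bddAbove_Tset (μ ν : Measure E2) [IsFiniteMeasure μ] [IsFiniteMeasure ν]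
    (φ₀ : E2 → ℝ) (hlip : LipschitzWith 1 φ₀)
    (h1 : Integrable φ₀ μ) (h2 : ¬ Integrable φ₀ ν) :
    ¬ BddAbove (Tset μ ν) := by
  rintro ⟨M, hM⟩
  have hM0 : (0:ℝ) ≤ M := hM (zero_mem_Tset μ ν)
  set B : ℝ := ∫ y, |φ₀ y| ∂μ with hB
  have hB0 : 0 ≤ B := integral_nonneg fun y => abs_nonneg _
  -- truncations
  set ψ : ℕ → E2 → ℝ := fun n y => min |φ₀ y| n with hψ
  have hψlip : ∀ n, LipschitzWith 1 (ψ n) := by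
    intro n
    have habs : LipschitzWith 1 (fun y => |φ₀ y|) := by
      have := (lipschitzWith_one_norm (E := ℝ)).comp hlip
      simpa [Function.comp_def, Real.norm_eq_abs] using this
    have := habs.min (LipschitzWith.const (α := E2) (n : ℝ))
    simpa using this.weaken (by simp)
  have hψcont : ∀ n, Continuous (ψ n) := fun n => (hψlip n).continuous
  have hψnonneg : ∀ n y, 0 ≤ ψ n y := fun n y => le_min (abs_nonneg _) (n.cast_nonneg)
  have hψle : ∀ n y, ψ n y ≤ n := fun n y => min_le_right _ _
  have hψint : ∀ (κ : Measure E2) [IsFiniteMeasure κ] (n : ℕ), Integrable (ψ n) κ := by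
    intro κ _ n
    refine Integrable.mono' (integrable_const (n : ℝ)) ((hψcont n).aestronglyMeasurable) ?_
    filter_upwards with y
    rw [Real.norm_eq_abs, abs_of_nonneg (hψnonneg n y)]
    exact hψle n y
  -- integrals over μ are bounded by B
  have hμbd : ∀ n, ∫ y, ψ n y ∂μ ≤ B := by
    intro n
    exact integral_mono (hψint μ n) h1.abs fun y => min_le_left _ _
  -- lintegrals over ν tend to ∞
  have hmono : Monotone (fun n => fun y => ENNReal.ofReal (ψ n y)) := by
    intro n m hnm
    intro y
    exact ENNReal.ofReal_le_ofReal (min_le_min le_rfl (by exact_mod_cast hnm))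
  have hmeas : ∀ n, Measurable (fun y => ENNReal.ofReal (ψ n y)) :=
    fun n => ENNReal.measurable_ofReal.comp (hψcont n).measurable
  have hsup : ∀ y, (⨆ n, ENNReal.ofReal (ψ n y)) = ENNReal.ofReal |φ₀ y| := by
    intro y
    apply le_antisymm
    · exact iSup_le fun n => ENNReal.ofReal_le_ofReal (min_le_left _ _)
    · obtain ⟨n, hn⟩ := exists_nat_ge |φ₀ y|
      exact le_iSup_of_le n (le_of_eq (by rw [hψ]; simp [min_eq_left hn]))
  have htop : ∫⁻ y, ENNReal.ofReal |φ₀ y| ∂ν = ⊤ := by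
    by_contra hne
    apply h2
    refine ⟨hlip.continuous.aestronglyMeasurable, ?_⟩
    rw [hasFiniteIntegral_iff_norm]
    simpa [Real.norm_eq_abs, lt_top_iff_ne_top] using hne
  have hlim : (⨆ n, ∫⁻ y, ENNReal.ofReal (ψ n y) ∂ν) = ⊤ := by
    rw [← lintegral_iSup hmeas hmono]
    rw [← htop]
    congr 1
    ext y
    exact hsup y
  obtain ⟨n, hn⟩ : ∃ n, ENNReal.ofReal (M + B + 1) < ∫⁻ y, ENNReal.ofReal (ψ n y) ∂ν := by
    have : ENNReal.ofReal (M + B + 1) < ⨆ n, ∫⁻ y, ENNReal.ofReal (ψ n y) ∂ν := by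
      rw [hlim]; exact ENNReal.ofReal_lt_top
    exact lt_iSup_iff.mp this
  have hfin : ∫⁻ y, ENNReal.ofReal (ψ n y) ∂ν ≠ ⊤ := by
    have hb : ∫⁻ y, ENNReal.ofReal (ψ n y) ∂ν ≤ ∫⁻ _, ENNReal.ofReal (n:ℝ) ∂ν :=
      lintegral_mono fun y => ENNReal.ofReal_le_ofReal (hψle n y)
    rw [lintegral_const] at hb
    exact ne_top_of_le_ne_top (ENNReal.mul_ne_top ENNReal.ofReal_ne_top
      (measure_ne_top ν _)) hb
  have hint : ∫ y, ψ n y ∂ν = (∫⁻ y, ENNReal.ofReal (ψ n y) ∂ν).toReal := by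
    exact integral_eq_lintegral_of_nonneg_ae (Filter.Eventually.of_forall (hψnonneg n))
      ((hψcont n).aestronglyMeasurable)
  have hge : M + B + 1 ≤ ∫ y, ψ n y ∂ν := by
    rw [hint]
    calc M + B + 1 = (ENNReal.ofReal (M + B + 1)).toReal := by
          rw [ENNReal.toReal_ofReal (by linarith)]
      _ ≤ _ := ENNReal.toReal_le_toReal ENNReal.ofReal_ne_top hfin |>.mpr hn.le
  have hmem : |(∫ y, ψ n y ∂μ) - ∫ y, ψ n y ∂ν| ∈ Tset μ ν :=
    ⟨ψ n, hψlip n, hψint μ n, hψint ν n, rfl⟩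
  have hle := hM hmem
  have : (∫ y, ψ n y ∂ν) - ∫ y, ψ n y ∂μ ≤ M := le_trans (by rw [abs_sub_comm]; exact le_abs_self _) hle
  linarith [hμbd n]

/-- Integral against the multiscale measure, when integrable. -/
lemma integral_multiscale (ε ρ : Measure E2) [IsFiniteMeasure ε] [IsFiniteMeasure ρ]
    (θ : E2 → ℝ) (x : E2) (hθ : θ x ∈ Set.Icc (0:ℝ) 1)
    (φ : E2 → ℝ) (h1 : Integrable φ ε) (h2 : Integrable φ ρ) :
    ∫ y, φ y ∂(multiscale ε ρ θ x) = θ x * ∫ y, φ y ∂ε + (1 - θ x) * ∫ y, φ y ∂ρ := by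
  rw [multiscale, integral_add_measure (h1.smul_measure ENNReal.ofReal_ne_top)
    (h2.smul_measure ENNReal.ofReal_ne_top), integral_smul_measure, integral_smul_measure,
    ENNReal.toReal_ofReal hθ.1, ENNReal.toReal_ofReal (by linarith [hθ.2])]
  simp [smul_eq_mul]

/-- A function integrable w.r.t. neither `ε` nor `ρ` is not integrable w.r.t. the
multiscale measure. -/
lemma not_integrable_multiscale (ε ρ : Measure E2) (θ : E2 → ℝ) (x : E2)
    (hθ : θ x ∈ Set.Icc (0:ℝ) 1) (φ : E2 → ℝ)
    (h1 : ¬ Integrable φ ε) (h2 : ¬ Integrable φ ρ) :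
    ¬ Integrable φ (multiscale ε ρ θ x) := by
  intro h
  rw [multiscale, integrable_add_measure] at h
  rcases eq_or_lt_of_le hθ.1 with ha | ha
  · have h1a : (1 : ℝ) - θ x = 1 := by rw [← ha]; ring
    apply h2
    have := h.2
    rw [h1a] at this
    rwa [integrable_smul_measure (by simp) ENNReal.ofReal_ne_top] at this
  · apply h1
    have := h.1
    rwa [integrable_smul_measure (by simp [ENNReal.ofReal_eq_zero, not_le, ha])
      ENNReal.ofReal_ne_top] at this

end Stmt3Aux

open Stmt3Aux

theorem stmt3
    (N : NNReal)
    (ε ρ : Measure E2) [IsFiniteMeasure ε] [IsFiniteMeasure ρ]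
    (hε : ε Set.univ = (N : ENNReal)) (hρ : ρ Set.univ = (N : ENNReal))
    (θ₁ θ₂ : E2 → ℝ) (Lθ₁ Lθ₂ : NNReal)
    (hθ₁lip : LipschitzWith Lθ₁ θ₁) (hθ₂lip : LipschitzWith Lθ₂ θ₂)
    (hθ₁01 : ∀ x, θ₁ x ∈ Set.Icc (0 : ℝ) 1) (hθ₂01 : ∀ x, θ₂ x ∈ Set.Icc (0 : ℝ) 1)
    (x₁ x₂ : E2) :
    W1 (multiscale ε ρ θ₁ x₁) (multiscale ε ρ θ₂ x₂) ≤
      ((⨆ x : E2, |θ₂ x - θ₁ x|) + min (Lθ₁ : ℝ) (Lθ₂ : ℝ) * ‖x₂ - x₁‖) * W1 ε ρ := by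
  classical
  set a := θ₁ x₁ with hadef
  set b := θ₂ x₂ with hbdef
  set Csup := ⨆ x : E2, |θ₂ x - θ₁ x| with hCdef
  set C := Csup + min (Lθ₁ : ℝ) (Lθ₂ : ℝ) * ‖x₂ - x₁‖ with hCCdef
  -- basic nonnegativity facts
  have hW1nonneg : (0:ℝ) ≤ W1 ε ρ := Real.iSup_nonneg fun φ => abs_nonneg _
  have hCsupBdd : BddAbove (Set.range fun x : E2 => |θ₂ x - θ₁ x|) := by
    refine ⟨1, ?_⟩
    rintro _ ⟨x, rfl⟩
    have h1 := hθ₁01 x; have h2 := hθ₂01 x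
    rw [abs_le]
    constructor <;> [linarith [h1.2, h2.1]; linarith [h1.1, h2.2]]
  have hCsup_nonneg : 0 ≤ Csup := Real.iSup_nonneg fun x => abs_nonneg _
  have hCnonneg : 0 ≤ C := by
    have : (0:ℝ) ≤ min (Lθ₁ : ℝ) (Lθ₂ : ℝ) * ‖x₂ - x₁‖ :=
      mul_nonneg (le_min Lθ₁.2 Lθ₂.2) (norm_nonneg _)
    rw [hCCdef]; linarith
  have hRHSnonneg : 0 ≤ C * W1 ε ρ := mul_nonneg hCnonneg hW1nonneg
  -- |a - b| ≤ C
  have habC : |a - b| ≤ C := by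
    have key : ∀ x : E2, |θ₂ x - θ₁ x| ≤ Csup := fun x => le_ciSup hCsupBdd x
    rcases le_total (Lθ₁ : ℝ) (Lθ₂ : ℝ) with h | h
    · have hl : |θ₁ x₁ - θ₁ x₂| ≤ (Lθ₁ : ℝ) * ‖x₂ - x₁‖ := by
        have := hθ₁lip.dist_le_mul x₁ x₂
        rw [Real.dist_eq, dist_eq_norm, ← norm_neg] at this
        simpa [neg_sub] using this
      calc |a - b| ≤ |θ₁ x₁ - θ₁ x₂| + |θ₁ x₂ - θ₂ x₂| := by
            have := abs_sub_le (θ₁ x₁) (θ₁ x₂) (θ₂ x₂); simpa [hadef, hbdef] using this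
        _ ≤ (Lθ₁ : ℝ) * ‖x₂ - x₁‖ + Csup := by
            gcongr
            rw [abs_sub_comm]; exact key x₂
        _ = C := by rw [hCCdef, min_eq_left h]; ring
    · have hl : |θ₂ x₁ - θ₂ x₂| ≤ (Lθ₂ : ℝ) * ‖x₂ - x₁‖ := by
        have := hθ₂lip.dist_le_mul x₁ x₂
        rw [Real.dist_eq, dist_eq_norm, ← norm_neg] at this
        simpa [neg_sub] using this
      calc |a - b| ≤ |θ₁ x₁ - θ₂ x₁| + |θ₂ x₁ - θ₂ x₂| := by
            have := abs_sub_le (θ₁ x₁) (θ₂ x₁) (θ₂ x₂); simpa [hadef, hbdef] using this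
        _ ≤ Csup + (Lθ₂ : ℝ) * ‖x₂ - x₁‖ := by
            gcongr
            · rw [abs_sub_comm]; exact key x₁
        _ = C := by rw [hCCdef, min_eq_right h]
  by_cases hT : BddAbove (Tset ε ρ)
  · -- bounded case: per-φ estimate
    -- the range of the dual values for (ε, ρ) is bounded above
    obtain ⟨M, hM⟩ := hT
    have hS1bdd : BddAbove (Set.range fun φ : {φ : E2 → ℝ // LipschitzWith 1 φ} =>
        |(∫ y, φ.1 y ∂ε) - ∫ y, φ.1 y ∂ρ|) := by
      refine ⟨max M 0, ?_⟩
      rintro _ ⟨φ, rfl⟩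
      by_cases h1 : Integrable φ.1 ε <;> by_cases h2 : Integrable φ.1 ρ
      · exact le_max_of_le_left (hM ⟨φ.1, φ.2, h1, h2, rfl⟩)
      · exact absurd ⟨M, hM⟩ (not_bddAbove_Tset ε ρ φ.1 φ.2 h1 h2)
      · exfalso
        have := not_bddAbove_Tset ρ ε φ.1 φ.2 h2 h1
        rw [Tset_comm ρ ε] at this
        exact this ⟨M, hM⟩
      · show |(∫ y, φ.1 y ∂ε) - ∫ y, φ.1 y ∂ρ| ≤ max M 0
        rw [integral_undef h1, integral_undef h2]
        simp
    rw [W1]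
    apply ciSup_le
    intro φ
    by_cases h1 : Integrable φ.1 ε <;> by_cases h2 : Integrable φ.1 ρ
    · rw [integral_multiscale ε ρ θ₁ x₁ (hθ₁01 x₁) φ.1 h1 h2,
        integral_multiscale ε ρ θ₂ x₂ (hθ₂01 x₂) φ.1 h1 h2]
      have heq : a * (∫ y, φ.1 y ∂ε) + (1 - a) * (∫ y, φ.1 y ∂ρ) -
          (b * (∫ y, φ.1 y ∂ε) + (1 - b) * (∫ y, φ.1 y ∂ρ)) =
          (a - b) * ((∫ y, φ.1 y ∂ε) - (∫ y, φ.1 y ∂ρ)) := by ring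
      rw [heq, abs_mul]
      have hterm : |(∫ y, φ.1 y ∂ε) - ∫ y, φ.1 y ∂ρ| ≤ W1 ε ρ := le_ciSup hS1bdd φ
      exact mul_le_mul habC hterm (abs_nonneg _) hCnonneg
    · exact absurd ⟨M, hM⟩ (not_bddAbove_Tset ε ρ φ.1 φ.2 h1 h2)
    · exfalso
      have := not_bddAbove_Tset ρ ε φ.1 φ.2 h2 h1
      rw [Tset_comm ρ ε] at this
      exact this ⟨M, hM⟩
    · rw [integral_undef (not_integrable_multiscale ε ρ θ₁ x₁ (hθ₁01 x₁) φ.1 h1 h2),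
        integral_undef (not_integrable_multiscale ε ρ θ₂ x₂ (hθ₂01 x₂) φ.1 h1 h2)]
      simpa using hRHSnonneg
  · -- unbounded case
    by_cases hab : a = b
    · have hmeq : multiscale ε ρ θ₁ x₁ = multiscale ε ρ θ₂ x₂ := by
        rw [multiscale, multiscale, ← hadef, ← hbdef, hab]
      rw [hmeq]
      have : W1 (multiscale ε ρ θ₂ x₂) (multiscale ε ρ θ₂ x₂) = 0 := by
        rw [W1]; simp
      rw [this]
      exact hRHSnonneg
    · -- a ≠ b : the LHS sup is over an unbounded set, hence 0 by convention
      have hS2unbdd : ¬ BddAbove (Set.range fun φ : {φ : E2 → ℝ // LipschitzWith 1 φ} =>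
          |(∫ y, φ.1 y ∂(multiscale ε ρ θ₁ x₁)) - ∫ y, φ.1 y ∂(multiscale ε ρ θ₂ x₂)|) := by
        rintro ⟨M, hM⟩
        apply hT
        refine ⟨M / |a - b|, ?_⟩
        rintro t ⟨φ, hlip, hi1, hi2, rfl⟩
        have hval : |(∫ y, φ y ∂(multiscale ε ρ θ₁ x₁)) -
            ∫ y, φ y ∂(multiscale ε ρ θ₂ x₂)| =
            |a - b| * |(∫ y, φ y ∂ε) - ∫ y, φ y ∂ρ| := by
          rw [integral_multiscale ε ρ θ₁ x₁ (hθ₁01 x₁) φ hi1 hi2,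
            integral_multiscale ε ρ θ₂ x₂ (hθ₂01 x₂) φ hi1 hi2, ← hadef, ← hbdef,
            ← abs_mul]
          congr 1
          ring
        have hmem : |(∫ y, φ y ∂(multiscale ε ρ θ₁ x₁)) -
            ∫ y, φ y ∂(multiscale ε ρ θ₂ x₂)| ≤ M := hM ⟨⟨φ, hlip⟩, rfl⟩
        rw [hval] at hmem
        have habs : (0:ℝ) < |a - b| := abs_pos.mpr (sub_ne_zero.mpr hab)
        rw [le_div_iff₀ habs, mul_comm]
        exact hmem
      rw [W1, Real.iSup_of_not_bddAbove hS2unbdd]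
      exact hRHSnonneg
end
end
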